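/- Fix real constants b, c, κ, e with b·c ≠ 0, a sign ε ∈ {1, −1}, and an integer m ≥ 2. If φ : ℝ → ℝ is twice differentiable on a nonempty open interval I and satisfies both (E1) and (E2) at every point of I, then φ vanishes identically on I. In other words, the system {(E1),(E2)} has no nonzero solutions on any nonempty open interval when bc ≠ 0. -/

import Mathlib

private lemma polyDeriv7 (a2 a3 a4 a5 a6 a7 x : ℝ) :
    HasDerivAt (fun t : ℝ => a2*t^2 + a3*t^3 + a4*t^4 + a5*t^5 + a6*t^6 + a7*t^7)
      (2*a2*x + 3*a3*x^2 + 4*a4*x^3 + 5*a5*x^4 + 6*a6*x^5 + 7*a7*x^6) x := by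
  have h := ((((((hasDerivAt_pow 2 x).const_mul a2).add
      ((hasDerivAt_pow 3 x).const_mul a3)).add
      ((hasDerivAt_pow 4 x).const_mul a4)).add
      ((hasDerivAt_pow 5 x).const_mul a5)).add
      ((hasDerivAt_pow 6 x).const_mul a6)).add
      ((hasDerivAt_pow 7 x).const_mul a7)
  refine h.congr_deriv ?_
  push_cast
  ring

/-- If `bc ≠ 0`, the system {(E1),(E2)} has no nonzero solutions on
any nonempty open interval (the paper's Proposition 4.4). -/
theorem stmt_9 (b c κ e : ℝ) (hbc : b*c ≠ 0)
    (ε : ℝ) (hε : ε = 1 ∨ ε = -1)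
    (m : ℤ) (hm : 2 ≤ m)
    (I : Set ℝ) (hIopen : IsOpen I) (hIne : I.Nonempty) (hIconn : I.OrdConnected)
    (φ : ℝ → ℝ)
    (hφ : ∀ τ ∈ I, DifferentiableAt ℝ φ τ)
    (hφ' : ∀ τ ∈ I, DifferentiableAt ℝ (deriv φ) τ)
    (hE1 : ∀ τ ∈ I,
      τ^2 * (τ-c)^2 * deriv (deriv φ) τ
        + (τ-c) * ((m:ℝ)*τ^2 - (τ-c)*(2*((m:ℝ)-1)*τ - b)) * deriv φ τ
        - (m:ℝ)*τ^2 * φ τ = -ε*κ*τ^2/2)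
    (hE2 : ∀ τ ∈ I,
      -τ^3*(τ-c) * deriv (deriv φ) τ
        + ((2*(m:ℝ)*τ - b)*τ*(τ-c) - ((m:ℝ)+1)*τ^3) * deriv φ τ
        + (2*(2*(m:ℝ)-1)*τ^2 - b*τ + 2*(τ-c)*(b - (2*(m:ℝ)-1)*τ)) * φ τ = e*τ) :
    ∀ τ ∈ I, φ τ = 0 := by
  have hb0 : b ≠ 0 := left_ne_zero_of_mul hbc
  have hc0 : c ≠ 0 := right_ne_zero_of_mul hbc
  set M : ℝ := (m:ℝ) with hMdef
  -- First-order relation obtained by eliminating φ'' :  P·φ' + Q·φ = R  on I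
  have hF1 : ∀ t ∈ I,
      (2*c^3*t^4 + (-5*c^2)*t^5 + (4*c)*t^6 + (-1)*t^7) * deriv φ t
        + ((2*b*c^3)*t^2 + (2*c^3 - 4*c^3*M - 5*b*c^2)*t^3
            + (-(4:ℝ)*c^2 + 8*c^2*M + 4*b*c)*t^4 + (2*c - 5*c*M - b)*t^5 + M*t^6) * φ t
      = (-c^2*e)*t^3 + (2*c*e)*t^4 + (-e - c*(ε*κ)/2)*t^5 + ((ε*κ)/2)*t^6 := by
    intro t ht
    linear_combination (-t^3*(t-c)) * hE1 t ht - (t^2*(t-c)^2) * hE2 t ht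
  have key : ∀ τ ∈ I, τ ≠ 0 → τ ≠ c → τ ≠ 2*c → φ τ = 0 := by
    intro τ hτ h1 h2 h3
    have hψ := (hφ' τ hτ).hasDerivAt
    have hφd := (hφ τ hτ).hasDerivAt
    -- derivatives of the polynomial coefficients
    have hP : HasDerivAt (fun t : ℝ => 2*c^3*t^4 + (-5*c^2)*t^5 + (4*c)*t^6 + (-1)*t^7)
        (8*c^3*τ^3 - 25*c^2*τ^4 + 24*c*τ^5 - 7*τ^6) τ := by
      have h := polyDeriv7 0 0 (2*c^3) (-5*c^2) (4*c) (-1) τ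
      have hf : (fun t : ℝ => 2*c^3*t^4 + (-5*c^2)*t^5 + (4*c)*t^6 + (-1)*t^7)
          = (fun t : ℝ => 0*t^2 + 0*t^3 + (2*c^3)*t^4 + (-5*c^2)*t^5 + (4*c)*t^6 + (-1)*t^7) := by
        funext t; ring
      rw [hf]; convert h using 1; ring
    have hQ : HasDerivAt (fun t : ℝ => (2*b*c^3)*t^2 + (2*c^3 - 4*c^3*M - 5*b*c^2)*t^3
            + (-(4:ℝ)*c^2 + 8*c^2*M + 4*b*c)*t^4 + (2*c - 5*c*M - b)*t^5 + M*t^6)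
        (2*(2*b*c^3)*τ + 3*(2*c^3 - 4*c^3*M - 5*b*c^2)*τ^2
            + 4*(-(4:ℝ)*c^2 + 8*c^2*M + 4*b*c)*τ^3 + 5*(2*c - 5*c*M - b)*τ^4 + 6*M*τ^5) τ := by
      have h := polyDeriv7 (2*b*c^3) (2*c^3 - 4*c^3*M - 5*b*c^2)
        (-(4:ℝ)*c^2 + 8*c^2*M + 4*b*c) (2*c - 5*c*M - b) M 0 τ
      have hf : (fun t : ℝ => (2*b*c^3)*t^2 + (2*c^3 - 4*c^3*M - 5*b*c^2)*t^3
            + (-(4:ℝ)*c^2 + 8*c^2*M + 4*b*c)*t^4 + (2*c - 5*c*M - b)*t^5 + M*t^6)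
          = (fun t : ℝ => (2*b*c^3)*t^2 + (2*c^3 - 4*c^3*M - 5*b*c^2)*t^3
            + (-(4:ℝ)*c^2 + 8*c^2*M + 4*b*c)*t^4 + (2*c - 5*c*M - b)*t^5 + M*t^6 + 0*t^7) := by
        funext t; ring
      rw [hf]; convert h using 1; ring
    have hR : HasDerivAt (fun t : ℝ => (-c^2*e)*t^3 + (2*c*e)*t^4
            + (-e - c*(ε*κ)/2)*t^5 + ((ε*κ)/2)*t^6)
        (3*(-c^2*e)*τ^2 + 4*(2*c*e)*τ^3 + 5*(-e - c*(ε*κ)/2)*τ^4 + 6*((ε*κ)/2)*τ^5) τ := by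
      have h := polyDeriv7 0 (-c^2*e) (2*c*e) (-e - c*(ε*κ)/2) ((ε*κ)/2) 0 τ
      have hf : (fun t : ℝ => (-c^2*e)*t^3 + (2*c*e)*t^4
            + (-e - c*(ε*κ)/2)*t^5 + ((ε*κ)/2)*t^6)
          = (fun t : ℝ => 0*t^2 + (-c^2*e)*t^3 + (2*c*e)*t^4
            + (-e - c*(ε*κ)/2)*t^5 + ((ε*κ)/2)*t^6 + 0*t^7) := by
        funext t; ring
      rw [hf]; convert h using 1; ring
    -- differentiate the relation F1 at τ
    have hG := (hP.mul hψ).add (hQ.mul hφd)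
    have hEq : (fun t : ℝ => (2*c^3*t^4 + (-5*c^2)*t^5 + (4*c)*t^6 + (-1)*t^7) * deriv φ t
        + ((2*b*c^3)*t^2 + (2*c^3 - 4*c^3*M - 5*b*c^2)*t^3
            + (-(4:ℝ)*c^2 + 8*c^2*M + 4*b*c)*t^4 + (2*c - 5*c*M - b)*t^5 + M*t^6) * φ t)
        =ᶠ[nhds τ] (fun t : ℝ => (-c^2*e)*t^3 + (2*c*e)*t^4
            + (-e - c*(ε*κ)/2)*t^5 + ((ε*κ)/2)*t^6) := by
      filter_upwards [hIopen.mem_nhds hτ] with x hx using hF1 x hx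
    have hder := (hG.congr_of_eventuallyEq hEq.symm).unique hR
    -- second-order relation obtained by eliminating φ' :  −P·φ'' + Cc·φ = Dd at τ
    have hF2 : -(2*c^3*τ^4 + (-5*c^2)*τ^5 + (4*c)*τ^6 + (-1)*τ^7) * deriv (deriv φ) τ
        + (2*b^2*c^3 + (6*b*c^3 - 8*b*c^3*M - 5*b^2*c^2)*τ
            + (4*c^3 - 12*c^3*M + 8*c^3*M^2 - 14*b*c^2 + 16*b*c^2*M + 4*b^2*c)*τ^2
            + (-(8:ℝ)*c^2 + 22*c^2*M - 12*c^2*M^2 + 10*b*c - 10*b*c*M - b^2)*τ^3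
            + (4*c - 10*c*M + 6*c*M^2 - 2*b + 2*b*M)*τ^4 + (M - M^2)*τ^5) * φ τ
        = (-b*c^2*e)*τ + (-(2:ℝ)*c^2*e + 2*c^2*M*e + 2*b*c*e)*τ^2
            + (4*c*e - 3*c*M*e - b*e - b*c*(ε*κ)/2)*τ^3
            + (-(2:ℝ)*e + M*e + c*M*(ε*κ) + b*(ε*κ)/2)*τ^4
            + ((ε*κ)/2 - M*(ε*κ)/2)*τ^5 := by
      linear_combination ((2*M*τ - b)*τ*(τ-c) - (M+1)*τ^3) * hE1 τ hτ
        - ((τ-c)*(M*τ^2 - (τ-c)*(2*(M-1)*τ - b))) * hE2 τ hτ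
    -- combine everything: U·φ = 0 with U = 2bc τ⁵ (τ−c)⁴ (τ−2c)
    have hmain : φ τ * (2*b*c*τ^5*(τ-c)^4*(τ-2*c)) = 0 := by
      linear_combination (2*c^3*τ^4 + (-5*c^2)*τ^5 + (4*c)*τ^6 + (-1)*τ^7) * hder
        - ((8*c^3*τ^3 - 25*c^2*τ^4 + 24*c*τ^5 - 7*τ^6)
            + ((2*b*c^3)*τ^2 + (2*c^3 - 4*c^3*M - 5*b*c^2)*τ^3
              + (-(4:ℝ)*c^2 + 8*c^2*M + 4*b*c)*τ^4 + (2*c - 5*c*M - b)*τ^5 + M*τ^6)) * hF1 τ hτ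
        + (2*c^3*τ^4 + (-5*c^2)*τ^5 + (4*c)*τ^6 + (-1)*τ^7) * hF2
    have hfac : (2*b*c*τ^5*(τ-c)^4*(τ-2*c)) ≠ 0 := by
      refine mul_ne_zero (mul_ne_zero (mul_ne_zero (mul_ne_zero ?_ hc0)
        (pow_ne_zero _ h1)) (pow_ne_zero _ (sub_ne_zero.mpr h2))) (sub_ne_zero.mpr h3)
      exact mul_ne_zero two_ne_zero hb0
    exact (mul_eq_zero.mp hmain).resolve_right hfac
  -- extend to the (at most three) exceptional points by continuity
  intro τ hτ
  have hne : ∀ a : ℝ, ∀ᶠ x in nhdsWithin τ {τ}ᶜ, x ≠ a := by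
    intro a
    rcases eq_or_ne τ a with rfl | h
    · exact eventually_mem_nhdsWithin
    · exact (eventually_ne_nhds h).filter_mono nhdsWithin_le_nhds
  have hI : ∀ᶠ x in nhdsWithin τ {τ}ᶜ, x ∈ I :=
    mem_nhdsWithin_of_mem_nhds (hIopen.mem_nhds hτ)
  have h0 : ∀ᶠ x in nhdsWithin τ {τ}ᶜ, φ x = 0 := by
    filter_upwards [hne 0, hne c, hne (2*c), hI] with x hx0 hxc hx2c hxI
    exact key x hxI hx0 hxc hx2c
  have t1 : Filter.Tendsto φ (nhdsWithin τ {τ}ᶜ) (nhds (φ τ)) :=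
    (hφ τ hτ).continuousAt.continuousWithinAt
  have t2 : Filter.Tendsto φ (nhdsWithin τ {τ}ᶜ) (nhds 0) := by
    refine Filter.Tendsto.congr' ?_ tendsto_const_nhds
    filter_upwards [h0] with x hx using hx.symm
  exact tendsto_nhds_unique t1 t2
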